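/- Let S̄ be a global control semigroup, X a metric space, and n ∈ ℕ. Then dim_S̄ X ≤ n if and only if both m-dim_S̄ X ≤ n and M-dim_S̄ X ≤ n; equivalently, dim_S̄ X = max{m-dim_S̄ X, M-dim_S̄ X}. -/

import Mathlib

open Filter Set Metric Topology
open scoped NNReal ENNReal

/-- A large-scale (asymptotic) dim-control function: continuous, increasing,
eventually at least the identity, tending to infinity. -/
def IsLSControl (f : ℝ≥0 → ℝ≥0) : Prop :=
  Continuous f ∧ Monotone f ∧ (∀ᶠ x in atTop, x ≤ f x) ∧ Tendsto f atTop atTop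

/-- Asymptotically linear: coincides with a linear function on a neighborhood of infinity. -/
def IsAsympLinear (f : ℝ≥0 → ℝ≥0) : Prop :=
  ∃ a b : ℝ≥0, ∀ᶠ x in atTop, f x = a * x + b

/-- A (large-scale) control semigroup. -/
def IsControlSemigroup (S : Set (ℝ≥0 → ℝ≥0)) : Prop :=
  (∀ f ∈ S, IsLSControl f) ∧
  (∀ f, IsLSControl f → IsAsympLinear f → f ∈ S) ∧
  (∀ f ∈ S, ∀ g ∈ S, f ∘ g ∈ S)

/-- A family of subsets is `s`-disjoint if distinct members are at distance `> s`. -/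
def SDisjoint {X : Type*} [MetricSpace X] (s : ℝ≥0) (𝒰 : Set (Set X)) : Prop :=
  ∀ U ∈ 𝒰, ∀ V ∈ 𝒰, U ≠ V → ∀ x ∈ U, ∀ y ∈ V, (s : ℝ) < dist x y

/-- A family of subsets is `D`-bounded if each member has diameter at most `D`. -/
def BoundedBy {X : Type*} [MetricSpace X] (D : ℝ≥0) (𝒰 : Set (Set X)) : Prop :=
  ∀ U ∈ 𝒰, EMetric.diam U ≤ (D : ℝ≥0∞)

/-- `asdim_S X ≤ n`. -/
def ASDimLE (S : Set (ℝ≥0 → ℝ≥0)) (X : Type*) [MetricSpace X] (n : ℕ) : Prop :=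
  ∃ f ∈ S, ∃ s₀ : ℝ≥0, ∀ s : ℝ≥0, s₀ ≤ s →
    ∃ 𝒰 : Fin (n + 1) → Set (Set X),
      (⋃ i, ⋃₀ 𝒰 i) = univ ∧ ∀ i, SDisjoint s (𝒰 i) ∧ BoundedBy (f s) (𝒰 i)

/-- The `S`-controlled asymptotic dimension, as an element of `ℕ∞`. -/
noncomputable def ASDim (S : Set (ℝ≥0 → ℝ≥0)) (X : Type*) [MetricSpace X] : ℕ∞ :=
  sInf {k : ℕ∞ | ∃ n : ℕ, k = n ∧ ASDimLE S X n}

/-- `S₁ ⪯ S₂` : `S₂` is finer than `S₁`. -/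
def Preceq (S₁ S₂ : Set (ℝ≥0 → ℝ≥0)) : Prop :=
  ∀ f ∈ S₂, ∃ g ∈ S₁, ∀ᶠ x in atTop, f x ≤ g x

/-- A small-scale dim-control function. -/
def IsSSControl (f : ℝ≥0 → ℝ≥0) : Prop :=
  Continuous f ∧ Monotone f ∧ f 0 = 0 ∧ ∀ᶠ x in 𝓝[>] (0 : ℝ≥0), x ≤ f x

/-- Coincides with a linear function on a neighborhood of `0`. -/
def IsLinearNearZero (f : ℝ≥0 → ℝ≥0) : Prop :=
  ∃ a b : ℝ≥0, ∀ᶠ x in 𝓝 (0 : ℝ≥0), f x = a * x + b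

/-- A small-scale control semigroup. -/
def IsSSControlSemigroup (ξ : Set (ℝ≥0 → ℝ≥0)) : Prop :=
  (∀ f ∈ ξ, IsSSControl f) ∧
  (∀ f, IsSSControl f → IsLinearNearZero f → f ∈ ξ) ∧
  (∀ f ∈ ξ, ∀ g ∈ ξ, f ∘ g ∈ ξ)

/-- A global dim-control function. -/
def IsGlobalControl (f : ℝ≥0 → ℝ≥0) : Prop :=
  Continuous f ∧ Monotone f ∧ f 0 = 0 ∧ Tendsto f atTop atTop ∧
    (∀ᶠ x in 𝓝[>] (0 : ℝ≥0), x ≤ f x) ∧ (∀ᶠ x in atTop, x ≤ f x)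

/-- A global control semigroup. -/
def IsGlobalControlSemigroup (S : Set (ℝ≥0 → ℝ≥0)) : Prop :=
  (∀ f ∈ S, IsGlobalControl f) ∧
  (∀ f, IsGlobalControl f → IsLinearNearZero f → IsAsympLinear f → f ∈ S) ∧
  (∀ f ∈ S, ∀ g ∈ S, f ∘ g ∈ S)

/-- `smdim_ξ X ≤ n`. -/
def SMDimLE (ξ : Set (ℝ≥0 → ℝ≥0)) (X : Type*) [MetricSpace X] (n : ℕ) : Prop :=
  ∃ f ∈ ξ, ∃ s₀ : ℝ≥0, 0 < s₀ ∧ ∀ s : ℝ≥0, 0 < s → s ≤ s₀ →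
    ∃ 𝒰 : Fin (n + 1) → Set (Set X),
      (⋃ i, ⋃₀ 𝒰 i) = univ ∧ ∀ i, SDisjoint s (𝒰 i) ∧ BoundedBy (f s) (𝒰 i)

/-- The `ξ`-controlled small-scale dimension. -/
noncomputable def SMDim (ξ : Set (ℝ≥0 → ℝ≥0)) (X : Type*) [MetricSpace X] : ℕ∞ :=
  sInf {k : ℕ∞ | ∃ n : ℕ, k = n ∧ SMDimLE ξ X n}

/-- `dim_S̄ X ≤ n` (global dimension). -/
def GDimLE (S : Set (ℝ≥0 → ℝ≥0)) (X : Type*) [MetricSpace X] (n : ℕ) : Prop :=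
  ∃ f ∈ S, ∀ s : ℝ≥0, 0 < s →
    ∃ 𝒰 : Fin (n + 1) → Set (Set X),
      (⋃ i, ⋃₀ 𝒰 i) = univ ∧ ∀ i, SDisjoint s (𝒰 i) ∧ BoundedBy (f s) (𝒰 i)

/-- The `S̄`-controlled global dimension. -/
noncomputable def GDim (S : Set (ℝ≥0 → ℝ≥0)) (X : Type*) [MetricSpace X] : ℕ∞ :=
  sInf {k : ℕ∞ | ∃ n : ℕ, k = n ∧ GDimLE S X n}

/-- Large-scale truncation `Trunc^{**}(S̄)`. -/
def TruncInf (S : Set (ℝ≥0 → ℝ≥0)) : Set (ℝ≥0 → ℝ≥0) :=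
  {g | IsLSControl g ∧ ∃ f ∈ S, ∀ᶠ x in atTop, g x = f x}

/-- Small-scale truncation `Trunc_{**}(S̄)`. -/
def TruncZero (S : Set (ℝ≥0 → ℝ≥0)) : Set (ℝ≥0 → ℝ≥0) :=
  {g | IsSSControl g ∧ ∃ f ∈ S, ∀ᶠ x in 𝓝 (0 : ℝ≥0), g x = f x}

/-- The linked set `Link(ξ, S)`. -/
def Link (ξ S : Set (ℝ≥0 → ℝ≥0)) : Set (ℝ≥0 → ℝ≥0) :=
  {g | Continuous g ∧ Monotone g ∧
    ∃ g₁ ∈ ξ, ∃ g₂ ∈ S, (∀ᶠ x in 𝓝 (0 : ℝ≥0), g x = g₁ x) ∧ (∀ᶠ x in atTop, g x = g₂ x)}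

/-- The distance function of an explicitly given metric space structure. -/
def MDist {X : Type*} (m : MetricSpace X) (x y : X) : ℝ :=
  @dist X m.toPseudoMetricSpace.toDist x y

-- AUX START

lemma emdiam_le_iff' {X : Type*} [MetricSpace X] {D : ℝ≥0} {U : Set X} :
    EMetric.diam U ≤ (D:ℝ≥0∞) ↔ ∀ x ∈ U, ∀ y ∈ U, dist x y ≤ (D:ℝ) := by
  rw [show EMetric.diam U = Metric.ediam U from rfl, Metric.ediam_le_iff]
  constructor
  · intro h x hx y hy
    have h1 := h x hx y hy
    rw [edist_le_coe, ← NNReal.coe_le_coe] at h1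
    rwa [coe_nndist] at h1
  · intro h x hx y hy
    rw [edist_le_coe, ← NNReal.coe_le_coe, coe_nndist]
    exact h x hx y hy

lemma mdist_self {X : Type*} (m : MetricSpace X) (x : X) : MDist m x x = 0 :=
  @dist_self X m.toPseudoMetricSpace x

def GoodCover {X : Type*} (m : MetricSpace X) (n : ℕ) (s D : ℝ≥0) : Prop :=
  ∃ 𝒰 : Fin (n + 1) → Set (Set X),
    (⋃ i, ⋃₀ 𝒰 i) = univ ∧ ∀ i, @SDisjoint X m s (𝒰 i) ∧ @BoundedBy X m D (𝒰 i)

lemma goodCover_mono {X : Type*} (m : MetricSpace X) {n : ℕ} {s D D' : ℝ≥0} (h : D ≤ D') :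
    GoodCover m n s D → GoodCover m n s D' := by
  rintro ⟨𝒰, hcov, hp⟩
  exact ⟨𝒰, hcov, fun i => ⟨(hp i).1,
    fun U hU => le_trans ((hp i).2 U hU) (ENNReal.coe_le_coe.mpr h)⟩⟩

section Transfers
variable {X : Type*} (m m' m'' : MetricSpace X)
variable (h' : ∀ x y : X, MDist m' x y = min (MDist m x y) 1)
variable (h'' : ∀ x y : X, x ≠ y → MDist m'' x y = max 1 (MDist m x y))

include h' in
lemma t1 {n : ℕ} {s D : ℝ≥0} (hs : s < 1) (h : GoodCover m n s D) : GoodCover m' n s D := by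
  obtain ⟨𝒰, hcov, hp⟩ := h
  refine ⟨𝒰, hcov, fun i => ⟨?_, ?_⟩⟩
  · intro U hU V hV hUV x hx y hy
    have hd : (s:ℝ) < MDist m x y := (hp i).1 U hU V hV hUV x hx y hy
    show (s:ℝ) < MDist m' x y
    rw [h']
    exact lt_min hd (by exact_mod_cast hs)
  · intro U hU
    have hb := (@emdiam_le_iff' X m _ _).mp ((hp i).2 U hU)
    refine (@emdiam_le_iff' X m' _ _).mpr ?_
    intro x hx y hy
    show MDist m' x y ≤ (D:ℝ)
    rw [h']
    exact le_trans (min_le_left _ _) (hb x hx y hy)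

include h' in
lemma t2 (n : ℕ) (s : ℝ≥0) : GoodCover m' n s 1 := by
  refine ⟨fun _ => {Set.univ}, ?_, ?_⟩
  · apply eq_univ_iff_forall.mpr
    intro x
    exact mem_iUnion.mpr ⟨0, Set.univ, rfl, mem_univ x⟩
  · intro i
    constructor
    · intro U hU V hV hUV x hx y hy
      rw [mem_singleton_iff] at hU hV
      exact absurd (hU.trans hV.symm) hUV
    · intro U hU
      rw [mem_singleton_iff] at hU
      subst hU
      refine (@emdiam_le_iff' X m' _ _).mpr ?_
      intro x _ y _
      show MDist m' x y ≤ ((1:ℝ≥0):ℝ)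
      rw [h']
      exact le_trans (min_le_right _ _) (by norm_num)

include h'' in
lemma t3 (n : ℕ) {s : ℝ≥0} (hs : s < 1) : GoodCover m'' n s 0 := by
  refine ⟨fun _ => (Set.range fun x : X => ({x} : Set X)), ?_, ?_⟩
  · apply eq_univ_iff_forall.mpr
    intro x
    exact mem_iUnion.mpr ⟨0, {x}, ⟨x, rfl⟩, rfl⟩
  · intro i
    constructor
    · intro U hU V hV hUV x hx y hy
      obtain ⟨u, hu⟩ := hU
      obtain ⟨v, hv⟩ := hV
      rw [← hu, mem_singleton_iff] at hx
      rw [← hv, mem_singleton_iff] at hy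
      have hne : x ≠ y := by
        intro hxy
        apply hUV
        rw [← hu, ← hv, ← hx, ← hy, hxy]
      show (s:ℝ) < MDist m'' x y
      rw [h'' x y hne]
      exact lt_of_lt_of_le (by exact_mod_cast hs) (le_max_left _ _)
    · intro U hU
      obtain ⟨u, hu⟩ := hU
      refine (@emdiam_le_iff' X m'' _ _).mpr ?_
      intro x hx y hy
      rw [← hu, mem_singleton_iff] at hx hy
      show MDist m'' x y ≤ ((0:ℝ≥0):ℝ)
      rw [hx, hy, mdist_self]
      norm_num

include h'' in
lemma t4 {n : ℕ} {s D : ℝ≥0} (hs : 0 < s) (h : GoodCover m n s D) :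
    GoodCover m'' n s (max 1 D) := by
  obtain ⟨𝒰, hcov, hp⟩ := h
  refine ⟨𝒰, hcov, fun i => ⟨?_, ?_⟩⟩
  · intro U hU V hV hUV x hx y hy
    have hd : (s:ℝ) < MDist m x y := (hp i).1 U hU V hV hUV x hx y hy
    have hs0 : (0:ℝ) < (s:ℝ) := by exact_mod_cast hs
    have hne : x ≠ y := by
      intro hxy
      subst hxy
      rw [mdist_self] at hd
      exact absurd hd (not_lt.mpr hs0.le)
    show (s:ℝ) < MDist m'' x y
    rw [h'' x y hne]
    exact lt_of_lt_of_le hd (le_max_right _ _)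
  · intro U hU
    have hb := (@emdiam_le_iff' X m _ _).mp ((hp i).2 U hU)
    refine (@emdiam_le_iff' X m'' _ _).mpr ?_
    intro x hx y hy
    show MDist m'' x y ≤ ((max 1 D : ℝ≥0):ℝ)
    have hco : ((max 1 D : ℝ≥0):ℝ) = max 1 (D:ℝ) := by
      push_cast; rfl
    rw [hco]
    by_cases hxy : x = y
    · subst hxy
      rw [mdist_self]
      exact le_trans zero_le_one (le_max_left _ _)
    · rw [h'' x y hxy]
      exact max_le_max le_rfl (hb x hx y hy)

include h' in
lemma t5 {n : ℕ} {s D : ℝ≥0} (hD : D < 1) (h : GoodCover m' n s D) : GoodCover m n s D := by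
  obtain ⟨𝒰, hcov, hp⟩ := h
  refine ⟨𝒰, hcov, fun i => ⟨?_, ?_⟩⟩
  · intro U hU V hV hUV x hx y hy
    have hd : (s:ℝ) < MDist m' x y := (hp i).1 U hU V hV hUV x hx y hy
    rw [h'] at hd
    exact lt_of_lt_of_le hd (min_le_left _ _)
  · intro U hU
    have hb := (@emdiam_le_iff' X m' _ _).mp ((hp i).2 U hU)
    refine (@emdiam_le_iff' X m _ _).mpr ?_
    intro x hx y hy
    have h1 : MDist m' x y ≤ (D:ℝ) := hb x hx y hy
    rw [h'] at h1
    have hD1 : (D:ℝ) < 1 := by exact_mod_cast hD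
    show MDist m x y ≤ (D:ℝ)
    by_cases hd1 : MDist m x y ≤ 1
    · rwa [min_eq_left hd1] at h1
    · exfalso
      push_neg at hd1
      rw [min_eq_right hd1.le] at h1
      exact absurd (lt_of_le_of_lt h1 hD1) (lt_irrefl 1)

include h'' in
lemma t6 {n : ℕ} {s t D : ℝ≥0} (ht : 1 ≤ t) (hst : s ≤ t) (h : GoodCover m'' n t D) :
    GoodCover m n s D := by
  obtain ⟨𝒰, hcov, hp⟩ := h
  have ht1 : (1:ℝ) ≤ (t:ℝ) := by exact_mod_cast ht
  have ht0 : (0:ℝ) < (t:ℝ) := lt_of_lt_of_le one_pos ht1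
  refine ⟨𝒰, hcov, fun i => ⟨?_, ?_⟩⟩
  · intro U hU V hV hUV x hx y hy
    have hd : (t:ℝ) < MDist m'' x y := (hp i).1 U hU V hV hUV x hx y hy
    have hne : x ≠ y := by
      intro hxy
      subst hxy
      rw [mdist_self] at hd
      exact absurd hd (not_lt.mpr ht0.le)
    rw [h'' x y hne] at hd
    have hdt : (t:ℝ) < MDist m x y := by
      by_contra hcon
      push_neg at hcon
      exact absurd hd (not_lt.mpr (max_le ht1 hcon))
    have hstr : (s:ℝ) ≤ (t:ℝ) := by exact_mod_cast hst
    show (s:ℝ) < MDist m x y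
    exact lt_of_le_of_lt hstr hdt
  · intro U hU
    have hb := (@emdiam_le_iff' X m'' _ _).mp ((hp i).2 U hU)
    refine (@emdiam_le_iff' X m _ _).mpr ?_
    intro x hx y hy
    show MDist m x y ≤ (D:ℝ)
    by_cases hxy : x = y
    · subst hxy
      rw [mdist_self]
      exact_mod_cast D.coe_nonneg
    · have h1 : MDist m'' x y ≤ (D:ℝ) := hb x hx y hy
      rw [h'' x y hxy] at h1
      exact le_trans (le_max_right _ _) h1

end Transfers

lemma linear_mem {Sb : Set (ℝ≥0 → ℝ≥0)} (hSb : IsGlobalControlSemigroup Sb) {c : ℝ≥0}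
    (hc : 1 ≤ c) : (fun x => c * x) ∈ Sb := by
  have hle : ∀ x : ℝ≥0, x ≤ c * x := fun x => le_mul_of_one_le_left zero_le hc
  refine hSb.2.1 _ ⟨by continuity, fun a b hab => mul_le_mul_of_nonneg_left hab zero_le, mul_zero c,
    tendsto_atTop_mono hle tendsto_id, Eventually.of_forall hle, Eventually.of_forall hle⟩
    ⟨c, 0, Eventually.of_forall fun x => (add_zero _).symm⟩
    ⟨c, 0, Eventually.of_forall fun x => (add_zero _).symm⟩

lemma maj {Sb : Set (ℝ≥0 → ℝ≥0)} (hSb : IsGlobalControlSemigroup Sb) {f : ℝ≥0 → ℝ≥0}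
    (hf : f ∈ Sb) :
    ∃ F ∈ Sb, Monotone F ∧ (∀ x, x ≤ F x) ∧ (∀ x, f x ≤ F x) := by
  obtain ⟨hcont, hmono, hf0, htop, hsm, hlg⟩ := hSb.1 f hf
  obtain ⟨ε, hε, hεle⟩ : ∃ ε : ℝ≥0, 0 < ε ∧ ∀ x, 0 < x → x ≤ ε → x ≤ f x := by
    rcases (nhdsGT_basis (0:ℝ≥0)).eventually_iff.mp hsm with ⟨ε, hε, hball⟩
    exact ⟨ε/2, by positivity, fun x hx hxe => hball ⟨hx, lt_of_le_of_lt hxe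
      (NNReal.half_lt_self (ne_of_gt hε))⟩⟩
  obtain ⟨M, hM⟩ := eventually_atTop.mp hlg
  obtain ⟨W, hW1, hW2⟩ := ((tendsto_atTop.mp htop M).and (eventually_ge_atTop M)).exists
  set c := max 1 (W / ε) with hcdef
  have hc1 : 1 ≤ c := le_max_left _ _
  have hcx : ∀ x : ℝ≥0, x ≤ c * x := fun x => le_mul_of_one_le_left zero_le hc1
  refine ⟨f ∘ (fun x => c * x), hSb.2.2 f hf _ (linear_mem hSb hc1),
    hmono.comp (fun a b hab => mul_le_mul_of_nonneg_left hab zero_le), ?_, fun x => hmono (hcx x)⟩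
  intro x
  rcases eq_or_lt_of_le (zero_le : 0 ≤ x) with h0 | h0
  · rw [← h0]; exact zero_le
  rcases le_or_gt x ε with hxε | hxε
  · exact le_trans (hεle x h0 hxε) (hmono (hcx x))
  rcases le_or_gt x M with hxM | hxM
  · have hWcx : W ≤ c * x := by
      calc W = (W / ε) * ε := by rw [div_mul_cancel₀ _ (ne_of_gt hε)]
        _ ≤ c * x := mul_le_mul' (le_max_right _ _) hxε.le
    calc x ≤ M := hxM
      _ ≤ f W := hW1
      _ ≤ f (c * x) := hmono hWcx
  · have hMcx : M ≤ c * x := le_trans hxM.le (hcx x)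
    exact le_trans (hcx x) (hM _ hMcx)

lemma gdimle_iff_good {X : Type*} (Sb : Set (ℝ≥0 → ℝ≥0)) (m : MetricSpace X) (n : ℕ) :
    @GDimLE Sb X m n ↔ ∃ f ∈ Sb, ∀ s : ℝ≥0, 0 < s → GoodCover m n s (f s) := Iff.rfl

section Main
variable {X : Type*} {Sb : Set (ℝ≥0 → ℝ≥0)} (hSb : IsGlobalControlSemigroup Sb)
variable (m m' m'' : MetricSpace X)
variable (h' : ∀ x y : X, MDist m' x y = min (MDist m x y) 1)
variable (h'' : ∀ x y : X, x ≠ y → MDist m'' x y = max 1 (MDist m x y))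

include hSb h' h'' in
lemma forward_dir {n : ℕ} (hle : @GDimLE Sb X m n) :
    @GDimLE Sb X m' n ∧ @GDimLE Sb X m'' n := by
  rw [gdimle_iff_good] at hle
  obtain ⟨f, hf, hcov⟩ := hle
  obtain ⟨F, hF, hFmono, hFid, hFf⟩ := maj hSb hf
  have hF1 : ∀ s : ℝ≥0, 1 ≤ s → 1 ≤ F s := fun s hs => le_trans (hFid 1) (hFmono hs)
  constructor
  · rw [gdimle_iff_good]
    refine ⟨F, hF, fun s hs => ?_⟩
    rcases lt_or_ge s 1 with hs1 | hs1
    · exact goodCover_mono m' (hFf s) (t1 m m' h' hs1 (hcov s hs))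
    · exact goodCover_mono m' (hF1 s hs1) (t2 m m' h' n s)
  · rw [gdimle_iff_good]
    refine ⟨F, hF, fun s hs => ?_⟩
    rcases lt_or_ge s 1 with hs1 | hs1
    · exact goodCover_mono m'' zero_le (t3 m m'' h'' n hs1)
    · exact goodCover_mono m'' (max_le (hF1 s hs1) (hFf s)) (t4 m m'' h'' hs (hcov s hs))

include hSb h' h'' in
lemma backward_dir {n : ℕ} (hle' : @GDimLE Sb X m' n) (hle'' : @GDimLE Sb X m'' n) :
    @GDimLE Sb X m n := by
  rw [gdimle_iff_good] at hle' hle'' ⊢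
  obtain ⟨f1, hf1, hcov1⟩ := hle'
  obtain ⟨f2, hf2, hcov2⟩ := hle''
  obtain ⟨F1, hF1, hF1mono, hF1id, hF1f⟩ := maj hSb hf1
  obtain ⟨F2, hF2, hF2mono, hF2id, hF2f⟩ := maj hSb hf2
  refine ⟨F2 ∘ F1, hSb.2.2 F2 hF2 F1 hF1, fun s hs => ?_⟩
  rcases lt_or_ge (f1 s) 1 with hc | hc
  · exact goodCover_mono m (le_trans (hF1f s) (hF2id (F1 s))) (t5 m m' h' hc (hcov1 s hs))
  · have ht1 : 1 ≤ F1 s := le_trans hc (hF1f s)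
    have ht0 : 0 < F1 s := lt_of_lt_of_le one_pos ht1
    exact goodCover_mono m (hF2f (F1 s)) (t6 m m'' h'' ht1 (hF1id s) (hcov2 (F1 s) ht0))

end Main

lemma gdimle_mono {X : Type*} (Sb : Set (ℝ≥0 → ℝ≥0)) (m : MetricSpace X) {a b : ℕ}
    (hab : a ≤ b) (h : @GDimLE Sb X m a) : @GDimLE Sb X m b := by
  obtain ⟨f, hf, hcov⟩ := h
  refine ⟨f, hf, fun s hs => ?_⟩
  obtain ⟨𝒰, hU, hp⟩ := hcov s hs
  refine ⟨fun j => 𝒰 ⟨min j.1 a, by omega⟩, ?_, fun j => hp _⟩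
  apply eq_univ_iff_forall.mpr
  intro x
  obtain ⟨i, hi⟩ := mem_iUnion.mp (eq_univ_iff_forall.mp hU x)
  refine mem_iUnion.mpr ⟨⟨i.1, by omega⟩, ?_⟩
  have hia : i.1 ≤ a := Nat.lt_succ_iff.mp i.2
  show x ∈ ⋃₀ 𝒰 ⟨min i.1 a, by omega⟩
  have h2 : (⟨min i.1 a, by omega⟩ : Fin (a+1)) = i := Fin.ext (min_eq_left hia)
  rw [h2]
  exact hi

lemma gdim_le_iff {X : Type*} (Sb : Set (ℝ≥0 → ℝ≥0)) (m : MetricSpace X) (n : ℕ) :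
    @GDim Sb X m ≤ (n : ℕ∞) ↔ @GDimLE Sb X m n := by
  constructor
  · intro h
    have h2 : sInf {k : ℕ∞ | ∃ j : ℕ, k = j ∧ @GDimLE Sb X m j} < ((n + 1 : ℕ) : ℕ∞) :=
      lt_of_le_of_lt h (by exact_mod_cast Nat.lt_succ_self n)
    obtain ⟨a, ⟨j, rfl, hj⟩, ha⟩ := sInf_lt_iff.mp h2
    have hjn : j ≤ n := Nat.lt_succ_iff.mp (by exact_mod_cast ha)
    exact gdimle_mono Sb m hjn hj
  · intro h
    exact sInf_le ⟨n, rfl, h⟩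

/-- `dim_S̄ X ≤ n` iff `m-dim_S̄ X ≤ n` and `M-dim_S̄ X ≤ n`; equivalently
`dim_S̄ X = max (m-dim_S̄ X) (M-dim_S̄ X)`.  Here `m-dim` and `M-dim` are the
global dimensions with respect to `d'_1 = min(d,1)` and `d''_1`
(`d''_1(x,y) = max (1, d(x,y))` for `x ≠ y`). -/
theorem gdim_eq_max_microscopic_macroscopic (X : Type*) (m : MetricSpace X)
    (Sb : Set (ℝ≥0 → ℝ≥0)) (hSb : IsGlobalControlSemigroup Sb) (n : ℕ)
    (m' m'' : MetricSpace X)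
    (h' : ∀ x y : X, MDist m' x y = min (MDist m x y) 1)
    (h'' : ∀ x y : X, x ≠ y → MDist m'' x y = max 1 (MDist m x y)) :
    (@GDim Sb X m ≤ (n : ℕ∞) ↔ @GDim Sb X m' ≤ (n : ℕ∞) ∧ @GDim Sb X m'' ≤ (n : ℕ∞)) ∧
    @GDim Sb X m = max (@GDim Sb X m') (@GDim Sb X m'') := by
  have key2 : ∀ k : ℕ, (@GDim Sb X m ≤ (k:ℕ∞) ↔
      @GDim Sb X m' ≤ (k:ℕ∞) ∧ @GDim Sb X m'' ≤ (k:ℕ∞)) := by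
    intro k
    rw [gdim_le_iff, gdim_le_iff, gdim_le_iff]
    exact ⟨fun h => forward_dir hSb m m' m'' h' h'' h,
      fun h => backward_dir hSb m m' m'' h' h'' h.1 h.2⟩
  refine ⟨key2 n, ?_⟩
  apply le_antisymm
  · cases hmax : max (@GDim Sb X m') (@GDim Sb X m'') with
    | top => exact le_top
    | coe k =>
      have hk : max (@GDim Sb X m') (@GDim Sb X m'') = ((k:ℕ):ℕ∞) := by
        exact_mod_cast hmax
      have h1 : @GDim Sb X m' ≤ ((k:ℕ):ℕ∞) := hk ▸ le_max_left _ _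
      have h2 : @GDim Sb X m'' ≤ ((k:ℕ):ℕ∞) := hk ▸ le_max_right _ _
      exact_mod_cast (key2 k).mpr ⟨h1, h2⟩
  · cases hA : @GDim Sb X m with
    | top => exact le_top
    | coe k =>
      have hk : @GDim Sb X m = ((k:ℕ):ℕ∞) := by exact_mod_cast hA
      obtain ⟨h1, h2⟩ := (key2 k).mp hk.le
      exact_mod_cast max_le h1 h2
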